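/- Let T be a tree, let G be a P_1-closed subgroup of Aut(T), and let H be a subgroup of G containing the pointwise stabilizer G_{(F)} of some finite set F of vertices. Suppose there exist g ∈ H and a vertex x with d(x, g x) > 0 and d(x, g² x) = 2·d(x, g x) (so g is hyperbolic and x lies on its axis), and let y be a vertex adjacent to x with d(y, g x) = d(x, g x) − 1 (so the arc (x,y) lies on the axis of g). Then the arc stabilizer G_{(x,y)} = {h ∈ G : h x = x and h y = y} is contained in H. -/

import Mathlib

open SimpleGraph

variable {V : Type*}

/-- The automorphism group of a simple graph `T`, as a subgroup of `Equiv.Perm V`. -/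
def SimpleGraph.autGroup (T : SimpleGraph V) : Subgroup (Equiv.Perm V) where
  carrier := {g : Equiv.Perm V | ∀ u v : V, T.Adj (g u) (g v) ↔ T.Adj u v}
  one_mem' := by intro u v; simp
  mul_mem' := by
    intro a b ha hb u v
    simpa using (ha (b u) (b v)).trans (hb u v)
  inv_mem' := by
    intro a ha u v
    simpa using (ha (a⁻¹ u) (a⁻¹ v)).symm

/-- The `P_k`-closure of a set `G` of automorphisms of `T`: all automorphisms `g` such that
for every vertex `v` and every finite set `X` of vertices at distance at most `k` from `v`,
some element of `G` agrees with `g` on `X`. -/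
def pClosure (T : SimpleGraph V) (k : ℕ) (G : Set ↥(T.autGroup)) : Set ↥(T.autGroup) :=
  {g | ∀ (v : V) (X : Finset V), (∀ x ∈ X, T.dist v x ≤ k) →
    ∃ h ∈ G, ∀ x ∈ X, g.val x = h.val x}


theorem Equiv.Perm.inv_apply_self {α : Type*} (f : Equiv.Perm α) (x : α) : f⁻¹ (f x) = x :=
  Equiv.symm_apply_apply f x

theorem Equiv.Perm.apply_inv_self {α : Type*} (f : Equiv.Perm α) (x : α) : f (f⁻¹ x) = x :=
  Equiv.apply_symm_apply f x

section TreeGeometry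
variable {T : SimpleGraph V} [DecidableEq V]

set_option linter.unusedSectionVars false

private lemma path_length_eq (hT : T.IsTree) {u v : V} (p : T.Walk u v) (hp : p.IsPath) :
    p.length = T.dist u v := by
  obtain ⟨q, hq⟩ := hT.isConnected.exists_walk_length_eq_dist u v
  have hb : q.bypass.length = T.dist u v :=
    le_antisymm (hq ▸ q.length_bypass_le) (SimpleGraph.dist_le _)
  have := (hT.existsUnique_path u v).unique hp q.bypass_isPath
  rw [this, hb]

private lemma exists_geodesic_path (hT : T.IsTree) (u v : V) :
    ∃ p : T.Walk u v, p.IsPath := by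
  obtain ⟨q, _⟩ := hT.isConnected.exists_walk_length_eq_dist u v
  exact ⟨q.bypass, q.bypass_isPath⟩

private lemma split_dist (hT : T.IsTree) {u v m : V} (p : T.Walk u v)
    (hp : p.IsPath) (hm : m ∈ p.support) :
    T.dist u m + T.dist m v = T.dist u v := by
  have h1 := path_length_eq hT _ (hp.takeUntil hm)
  have h2 := path_length_eq hT _ (hp.dropUntil hm)
  have h3 := path_length_eq hT p hp
  have := congrArg SimpleGraph.Walk.length (p.take_spec hm)
  rw [SimpleGraph.Walk.length_append] at this
  omega

private lemma append_isPath {u v w : V} {p : T.Walk u v} {q : T.Walk v w}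
    (hp : p.IsPath) (hq : q.IsPath)
    (hd : ∀ a ∈ p.support, a ∈ q.support → a = v) : (p.append q).IsPath := by
  rw [SimpleGraph.Walk.isPath_def, SimpleGraph.Walk.support_append]
  have hqn : q.support.Nodup := hq.support_nodup
  have hq2 : q.support = v :: q.support.tail := q.support_eq_cons
  have hvt : v ∉ q.support.tail := by
    rw [hq2] at hqn; exact (List.nodup_cons.mp hqn).1
  refine List.Nodup.append hp.support_nodup ?_ ?_
  · rw [hq2] at hqn; exact (List.nodup_cons.mp hqn).2
  · intro a ha hat
    have : a ∈ q.support := by rw [hq2]; exact List.mem_cons_of_mem _ hat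
    exact hvt (hd a ha this ▸ hat)

/-- Median existence in a tree. -/
private lemma median (hT : T.IsTree) (u v w : V) :
    ∃ m : V, T.dist u m + T.dist m v = T.dist u v ∧
      T.dist u m + T.dist m w = T.dist u w ∧
      T.dist v m + T.dist m w = T.dist v w := by
  obtain ⟨p, hp⟩ := exists_geodesic_path hT u v
  -- choose m on p minimizing dist to w
  obtain ⟨m, hmS, hmin⟩ := p.support.toFinset.exists_min_image (fun a => T.dist w a)
    ⟨u, by simp [SimpleGraph.Walk.start_mem_support]⟩
  rw [List.mem_toFinset] at hmS
  obtain ⟨q, hq⟩ := exists_geodesic_path hT w m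
  -- any vertex of q on p equals m
  have hkey : ∀ a ∈ q.support, a ∈ p.support → a = m := by
    intro a haq hap
    have h1 := split_dist hT q hq haq
    have h2 : T.dist w m ≤ T.dist w a := hmin a (List.mem_toFinset.mpr hap)
    have h3 : T.dist a m = 0 := by omega
    exact (hT.isConnected.dist_eq_zero_iff).mp h3
  refine ⟨m, split_dist hT p hp hmS, ?_, ?_⟩
  · -- path u → m → w
    have hP1 : (p.takeUntil m hmS).IsPath := hp.takeUntil hmS
    have hP2 : ((p.takeUntil m hmS).append q.reverse).IsPath := by
      refine append_isPath hP1 (hq.reverse) ?_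
      intro a ha haq
      refine hkey a ?_ (SimpleGraph.Walk.support_takeUntil_subset _ _ ha)
      rwa [SimpleGraph.Walk.support_reverse, List.mem_reverse] at haq
    have := path_length_eq hT _ hP2
    rw [SimpleGraph.Walk.length_append, SimpleGraph.Walk.length_reverse] at this
    have l1 := path_length_eq hT _ hP1
    have l2 := path_length_eq hT q hq
    have c1 : T.dist m w = T.dist w m := SimpleGraph.dist_comm
    omega
  · -- path v → m → w
    have hP1 : ((p.dropUntil m hmS).reverse).IsPath := (hp.dropUntil hmS).reverse
    have hP2 : (((p.dropUntil m hmS).reverse).append q.reverse).IsPath := by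
      refine append_isPath hP1 (hq.reverse) ?_
      intro a ha haq
      rw [SimpleGraph.Walk.support_reverse, List.mem_reverse] at ha haq
      exact hkey a haq (SimpleGraph.Walk.support_dropUntil_subset _ _ ha)
    have := path_length_eq hT _ hP2
    rw [SimpleGraph.Walk.length_append, SimpleGraph.Walk.length_reverse,
      SimpleGraph.Walk.length_reverse] at this
    have l1 := path_length_eq hT _ hP1
    rw [SimpleGraph.Walk.length_reverse] at l1
    have l2 := path_length_eq hT q hq
    have c1 : T.dist m w = T.dist w m := SimpleGraph.dist_comm
    omega

private lemma between_path (hT : T.IsTree) {u v m : V}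
    (hb : T.dist u m + T.dist m v = T.dist u v) :
    ∃ p : T.Walk u v, p.IsPath ∧ m ∈ p.support := by
  obtain ⟨p1, hp1⟩ := exists_geodesic_path hT u m
  obtain ⟨p2, hp2⟩ := exists_geodesic_path hT m v
  have hP : (p1.append p2).IsPath := by
    refine append_isPath hp1 hp2 ?_
    intro a ha1 ha2
    have h1 := split_dist hT p1 hp1 ha1
    have h2 := split_dist hT p2 hp2 ha2
    have h3 : T.dist u v ≤ T.dist u a + T.dist a v := hT.isConnected.dist_triangle
    have c1 : T.dist a m = T.dist m a := SimpleGraph.dist_comm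
    have : T.dist a m = 0 := by omega
    exact hT.isConnected.dist_eq_zero_iff.mp this
  exact ⟨p1.append p2, hP,
    SimpleGraph.Walk.subset_support_append_left _ _ p1.end_mem_support⟩

/-- In a tree, two points between `a` and `b` are comparable. -/
private lemma between_disj (hT : T.IsTree) {a b p q : V}
    (hp : T.dist a p + T.dist p b = T.dist a b)
    (hq : T.dist a q + T.dist q b = T.dist a b) :
    T.dist a p + T.dist p q = T.dist a q ∨ T.dist a q + T.dist q p = T.dist a p := by
  obtain ⟨P, hP, hpP⟩ := between_path hT hp
  obtain ⟨Q, hQ, hqQ⟩ := between_path hT hq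
  have hPQ : P = Q := (hT.existsUnique_path a b).unique hP hQ
  have hqP : q ∈ P.support := hPQ ▸ hqQ
  -- split P at q
  have hsplit := P.take_spec hqP
  have hmem : p ∈ (P.takeUntil q hqP).support ∨ p ∈ (P.dropUntil q hqP).support := by
    rw [← SimpleGraph.Walk.mem_support_append_iff, hsplit]; exact hpP
  rcases hmem with hm | hm
  · exact Or.inl (split_dist hT _ (hP.takeUntil hqP) hm)
  · right
    have h1 := split_dist hT _ (hP.dropUntil hqP) hm
    have h2 := split_dist hT P hP hqP
    have h3 := split_dist hT P hP hpP
    omega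

private lemma lemmaB (hT : T.IsTree) {a m c d : V}
    (h1 : T.dist a m + T.dist m c = T.dist a c)
    (h2 : T.dist m c + T.dist c d = T.dist m d)
    (hmc : 0 < T.dist m c) :
    T.dist a d = T.dist a c + T.dist c d := by
  obtain ⟨m0, e1, e2, e3⟩ := median hT a c d
  -- e1 : d a m0 + d m0 c = d a c ; e2 : d a m0 + d m0 d = d a d ; e3 : d c m0 + d m0 d = d c d
  have hdisj := between_disj hT h1 e1
  have htr : T.dist m d ≤ T.dist m m0 + T.dist m0 d := hT.isConnected.dist_triangle
  have c1 : T.dist c m0 = T.dist m0 c := SimpleGraph.dist_comm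
  have c2 : T.dist m0 m = T.dist m m0 := SimpleGraph.dist_comm
  have hk : T.dist m0 c = 0 := by omega
  have : m0 = c := hT.isConnected.dist_eq_zero_iff.mp hk
  subst this
  omega

/-- if `X` is between `x` and `Y`, and `v` is closer to `x` than `X` is,
then the geodesic from `v` to `Y` passes through `X`. -/
private lemma farside (hT : T.IsTree) {x X Y v : V}
    (hb : T.dist x X + T.dist X Y = T.dist x Y)
    (hlt : T.dist x v < T.dist x X) :
    T.dist v Y = T.dist v X + T.dist X Y := by
  obtain ⟨m, e1, e2, e3⟩ := median hT v x Y
  -- e1 : d v m + d m x = d v x ; e2 : d v m + d m Y = d v Y ; e3 : d x m + d m Y = d x Y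
  have hmB : T.dist x m + T.dist m Y = T.dist x Y := e3
  have hdisj := between_disj hT hmB hb
  have hxm : T.dist x m ≤ T.dist x v := by
    have c1 : T.dist x m = T.dist m x := SimpleGraph.dist_comm
    have c2 : T.dist v x = T.dist x v := SimpleGraph.dist_comm
    omega
  -- rule out second disjunct
  have hmX : T.dist x m + T.dist m X = T.dist x X := by
    rcases hdisj with h | h
    · exact h
    · have : T.dist X m = T.dist m X := SimpleGraph.dist_comm
      omega
  have ht1 : T.dist v X ≤ T.dist v m + T.dist m X := hT.isConnected.dist_triangle
  have ht2 : T.dist v Y ≤ T.dist v X + T.dist X Y := hT.isConnected.dist_triangle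
  omega

/-- an automorphism preserves distances -/
private lemma aut_dist (hT : T.IsTree) (e : Equiv.Perm V)
    (he : ∀ u v : V, T.Adj (e u) (e v) ↔ T.Adj u v) (u v : V) :
    T.dist (e u) (e v) = T.dist u v := by
  have key : ∀ (f : Equiv.Perm V), (∀ a b : V, T.Adj (f a) (f b) ↔ T.Adj a b) →
      ∀ a b : V, T.dist (f a) (f b) ≤ T.dist a b := by
    intro f hf a b
    obtain ⟨p, hp⟩ := hT.isConnected.exists_walk_length_eq_dist a b
    let F : T →g T := ⟨f, fun {c d} h => (hf c d).mpr h⟩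
    have := SimpleGraph.dist_le (p.map F)
    rwa [SimpleGraph.Walk.length_map, hp] at this
  refine le_antisymm (key e he u v) ?_
  have he' : ∀ a b : V, T.Adj (e⁻¹ a) (e⁻¹ b) ↔ T.Adj a b := by
    intro a b
    conv_rhs => rw [← Equiv.Perm.apply_inv_self e a, ← Equiv.Perm.apply_inv_self e b]
    exact (he _ _).symm
  have := key e⁻¹ he' (e u) (e v)
  simpa using this

private lemma axis_dists (hT : T.IsTree) (e : Equiv.Perm V)
    (he : ∀ u v : V, T.Adj (e u) (e v) ↔ T.Adj u v) (x y : V)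
    (hx1 : 0 < T.dist x (e x))
    (hx2 : T.dist x (e (e x)) = 2 * T.dist x (e x))
    (hxy : T.Adj x y)
    (hyx : T.dist y (e x) + 1 = T.dist x (e x)) :
    ∀ n : ℕ, T.dist x ((e ^ n) x) = n * T.dist x (e x)
      ∧ T.dist x ((e ^ n) y) = n * T.dist x (e x) + 1
      ∧ T.dist y ((e ^ n) y) = n * T.dist x (e x) := by
  set ℓ := T.dist x (e x) with hℓ
  have hep : ∀ n : ℕ, ∀ u v : V, T.Adj ((e ^ n) u) ((e ^ n) v) ↔ T.Adj u v := by
    intro n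
    induction n with
    | zero => intro u v; simp
    | succ n ih =>
      intro u v
      have h1 : (e ^ (n + 1)) u = (e ^ n) (e u) := by rw [pow_succ]; rfl
      have h2 : (e ^ (n + 1)) v = (e ^ n) (e v) := by rw [pow_succ]; rfl
      rw [h1, h2]
      exact (ih (e u) (e v)).trans (he u v)
  have dpres : ∀ n : ℕ, ∀ u v : V, T.dist ((e ^ n) u) ((e ^ n) v) = T.dist u v :=
    fun n => aut_dist hT (e ^ n) (hep n)
  have happ : ∀ (n : ℕ) (v : V), (e ^ (n + 1)) v = (e ^ n) (e v) := by
    intro n v; rw [pow_succ]; rfl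
  have happ' : ∀ (n : ℕ) (v : V), (e ^ (n + 1)) v = e ((e ^ n) v) := by
    intro n v; rw [pow_succ']; rfl
  have dpres1 : ∀ u v : V, T.dist (e u) (e v) = T.dist u v := by
    have := dpres 1
    simpa using this
  have hxy1 : T.dist x y = 1 := SimpleGraph.dist_eq_one_iff_adj.mpr hxy
  -- base facts
  have base_yy : T.dist y (e y) = ℓ ∧ T.dist x (e y) = ℓ + 1 := by
    by_cases hc : T.dist y (e x) = 0
    · have hy_eq : y = e x := hT.isConnected.dist_eq_zero_iff.mp hc
      have hl1 : ℓ = 1 := by omega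
      constructor
      · rw [hy_eq, dpres1 x (e x), ← hℓ, hl1]
      · rw [hy_eq, hx2, hl1]
    · have ha : 0 < T.dist y (e x) := Nat.pos_of_ne_zero hc
      have t1 : T.dist x (e (e x)) ≤ T.dist x y + T.dist y (e (e x)) :=
        hT.isConnected.dist_triangle
      have t2 : T.dist y (e (e x)) ≤ T.dist y (e x) + T.dist (e x) (e (e x)) :=
        hT.isConnected.dist_triangle
      have d1 : T.dist (e x) (e (e x)) = ℓ := dpres1 x (e x)
      have d2 : T.dist (e x) (e y) = 1 := by rw [dpres1 x y]; exact hxy1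
      have d3 : T.dist (e y) (e (e x)) = T.dist y (e x) := dpres1 y (e x)
      have t3 : T.dist y (e y) ≤ T.dist y (e x) + T.dist (e x) (e y) :=
        hT.isConnected.dist_triangle
      have t4 : T.dist y (e (e x)) ≤ T.dist y (e y) + T.dist (e y) (e (e x)) :=
        hT.isConnected.dist_triangle
      have byy : T.dist y (e y) = ℓ := by omega
      refine ⟨byy, ?_⟩
      have := lemmaB hT (a := x) (m := y) (c := e x) (d := e y)
        (by omega) (by omega) ha
      omega
  obtain ⟨byy, bxy⟩ := base_yy
  -- F1
  have F1 : ∀ n : ℕ, T.dist x ((e ^ n) x) = n * ℓ ∧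
      T.dist x ((e ^ (n + 1)) x) = (n + 1) * ℓ := by
    intro n
    induction n with
    | zero => simp [hℓ]
    | succ n ih =>
      refine ⟨ih.2, ?_⟩
      have E1 : (e ^ (n + 1)) x = (e ^ n) (e x) := happ n x
      have E2 : (e ^ (n + 1 + 1)) x = (e ^ (n + 1)) (e x) := happ (n + 1) x
      have E3 : (e ^ (n + 1)) (e x) = (e ^ n) (e (e x)) := happ n (e x)
      have dstep : T.dist ((e ^ n) x) ((e ^ (n + 1)) x) = ℓ := by
        rw [E1, dpres n x (e x)]
      have dstep2 : T.dist ((e ^ (n + 1)) x) ((e ^ (n + 1 + 1)) x) = ℓ := by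
        rw [E2, dpres (n + 1) x (e x)]
      have d2 : T.dist ((e ^ n) x) ((e ^ (n + 1 + 1)) x) = 2 * ℓ := by
        rw [E2, E3, dpres n x (e (e x)), hx2]
      have e1 : (n + 1 + 1) * ℓ = (n + 1) * ℓ + ℓ := by ring
      have e2 : (n + 1) * ℓ = n * ℓ + ℓ := by ring
      have key := lemmaB hT (a := x) (m := (e ^ n) x) (c := (e ^ (n + 1)) x)
        (d := (e ^ (n + 1 + 1)) x) (by omega) (by omega) (by omega)
      omega
  -- F2
  have F2 : ∀ n : ℕ, T.dist x ((e ^ n) y) = n * ℓ + 1 := by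
    intro n
    induction n with
    | zero => simpa using hxy1
    | succ n ih =>
      have E1 : (e ^ (n + 1)) x = (e ^ n) (e x) := happ n x
      have EY : (e ^ (n + 1)) y = (e ^ n) (e y) := happ n y
      have dstep : T.dist ((e ^ n) x) ((e ^ (n + 1)) x) = ℓ := by
        rw [E1, dpres n x (e x)]
      have d2 : T.dist ((e ^ (n + 1)) x) ((e ^ (n + 1)) y) = 1 := by
        rw [dpres (n + 1) x y]; exact hxy1
      have d3 : T.dist ((e ^ n) x) ((e ^ (n + 1)) y) = ℓ + 1 := by
        rw [EY, dpres n x (e y)]; exact bxy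
      have h1 := (F1 n).1
      have h2 := (F1 n).2
      have e1 : (n + 1) * ℓ = n * ℓ + ℓ := by ring
      have key := lemmaB hT (a := x) (m := (e ^ n) x) (c := (e ^ (n + 1)) x)
        (d := (e ^ (n + 1)) y) (by omega) (by omega) (by omega)
      omega
  -- F3
  have F3 : ∀ n : ℕ, T.dist y ((e ^ n) y) = n * ℓ := by
    intro n
    cases n with
    | zero => simpa using SimpleGraph.dist_self
    | succ m =>
      have t1 : T.dist y ((e ^ (m + 1)) y) ≤ T.dist y (e x) + T.dist (e x) ((e ^ (m + 1)) y) :=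
        hT.isConnected.dist_triangle
      have d1 : T.dist (e x) ((e ^ (m + 1)) y) = m * ℓ + 1 := by
        rw [happ' m y, dpres1 x ((e ^ m) y)]; exact F2 m
      have t2 : T.dist x ((e ^ (m + 1)) y) ≤ T.dist x y + T.dist y ((e ^ (m + 1)) y) :=
        hT.isConnected.dist_triangle
      have h2 := F2 (m + 1)
      have goal : T.dist y ((e ^ (m + 1)) y) = (m + 1) * ℓ := by
        have e1 : (m + 1) * ℓ = m * ℓ + ℓ := by ring
        omega
      exact goal
  exact fun n => ⟨(F1 n).1, F2 n, F3 n⟩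

/-- the only edge between the two sides of the edge `(x, y)` is `(x, y)` itself -/
private lemma crossEdge (hT : T.IsTree) {x y : V} (hadj : T.Adj x y) {u v : V}
    (huv : T.Adj u v) (hu : T.dist u x < T.dist u y)
    (hv : ¬ T.dist v x < T.dist v y) : u = x ∧ v = y := by
  have hxy1 : T.dist x y = 1 := SimpleGraph.dist_eq_one_iff_adj.mpr hadj
  have huv1 : T.dist u v = 1 := SimpleGraph.dist_eq_one_iff_adj.mpr huv
  have t1 : T.dist u y ≤ T.dist u x + T.dist x y := hT.isConnected.dist_triangle
  have hu1 : T.dist u y = T.dist u x + 1 := by omega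
  -- show d v x = d v y + 1 via the median of (v, x, y)
  obtain ⟨m, e1, e2, e3⟩ := median hT v x y
  have hv1 : T.dist v x = T.dist v y + 1 := by
    have c0 : T.dist y x = T.dist x y := SimpleGraph.dist_comm
    rcases Nat.eq_zero_or_pos (T.dist x m) with h0 | hpos
    · have hmx : x = m := hT.isConnected.dist_eq_zero_iff.mp h0
      subst hmx
      omega
    · have hmy : T.dist m y = 0 := by omega
      have : m = y := hT.isConnected.dist_eq_zero_iff.mp hmy
      subst this
      omega
  have t2 : T.dist u y ≤ T.dist u v + T.dist v y := hT.isConnected.dist_triangle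
  have t3 : T.dist v x ≤ T.dist v u + T.dist u x := hT.isConnected.dist_triangle
  have c1 : T.dist v u = T.dist u v := SimpleGraph.dist_comm
  have c2 : T.dist y v = T.dist v y := SimpleGraph.dist_comm
  have c3 : T.dist x v = T.dist v x := SimpleGraph.dist_comm
  have key := lemmaB hT (a := u) (m := x) (c := y) (d := v)
    (by omega) (by omega) (by omega)
  have hux : T.dist u x = 0 := by omega
  have hvy : T.dist v y = 0 := by omega
  exact ⟨hT.isConnected.dist_eq_zero_iff.mp hux, hT.isConnected.dist_eq_zero_iff.mp hvy⟩

end TreeGeometry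

/-- Proposition: if an open subgroup `H` of a `P_1`-closed group `G ≤ Aut(T)` (i.e. `H`
contains the pointwise stabilizer in `G` of a finite set `F` of vertices) contains a
hyperbolic element `g`, then `H` contains the `G`-stabilizer of every arc `(x,y)`
along the axis of `g`. -/
theorem arcStabilizer_on_axis_le
    (T : SimpleGraph V) (hT : T.IsTree) (G : Subgroup ↥(T.autGroup))
    (hG : pClosure T 1 (G : Set ↥(T.autGroup)) = (G : Set ↥(T.autGroup)))
    (H : Subgroup ↥(T.autGroup)) (hHG : H ≤ G)
    (F : Finset V) (hF : ∀ g ∈ G, (∀ v ∈ F, g.val v = v) → g ∈ H)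
    (g : ↥(T.autGroup)) (hgH : g ∈ H) (x : V)
    (hx1 : 0 < T.dist x (g.val x))
    (hx2 : T.dist x (g.val (g.val x)) = 2 * T.dist x (g.val x))
    (y : V) (hadj : T.Adj x y)
    (hy : T.dist y (g.val x) = T.dist x (g.val x) - 1) :
    ∀ h ∈ G, h.val x = x → h.val y = y → h ∈ H := by
  classical
  intro h hhG hhx hhy
  have hgG : g ∈ G := hHG hgH
  set e : Equiv.Perm V := g.val with he_def
  have heprop : ∀ u v : V, T.Adj (e u) (e v) ↔ T.Adj u v := g.prop
  have hhprop : ∀ u v : V, T.Adj (h.val u) (h.val v) ↔ T.Adj u v := h.prop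
  have hyx : T.dist y (e x) + 1 = T.dist x (e x) := by
    have t1 : T.dist x (e x) ≤ T.dist x y + T.dist y (e x) := hT.isConnected.dist_triangle
    have hxy1 : T.dist x y = 1 := SimpleGraph.dist_eq_one_iff_adj.mpr hadj
    omega
  set ℓ := T.dist x (e x) with hℓdef
  have AD := axis_dists hT e heprop x y hx1 hx2 hadj hyx
  have hxy1 : T.dist x y = 1 := SimpleGraph.dist_eq_one_iff_adj.mpr hadj
  -- distance preservation by powers of e and their inverses
  have hep : ∀ n : ℕ, ∀ u v : V, T.Adj ((e ^ n) u) ((e ^ n) v) ↔ T.Adj u v :=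
    fun n => (g ^ n).prop
  have hepinv : ∀ n : ℕ, ∀ u v : V, T.Adj ((e ^ n)⁻¹ u) ((e ^ n)⁻¹ v) ↔ T.Adj u v :=
    fun n => ((g ^ n)⁻¹).prop
  have dpres : ∀ n : ℕ, ∀ u v : V, T.dist ((e ^ n) u) ((e ^ n) v) = T.dist u v :=
    fun n => aut_dist hT (e ^ n) (hep n)
  have dpresInv : ∀ n : ℕ, ∀ u v : V, T.dist ((e ^ n)⁻¹ u) ((e ^ n)⁻¹ v) = T.dist u v :=
    fun n => aut_dist hT (e ^ n)⁻¹ (hepinv n)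
  have hdist_h : ∀ u v : V, T.dist (h.val u) (h.val v) = T.dist u v :=
    aut_dist hT h.val hhprop
  -- the h-image preserves the sides of the edge (x, y)
  have hPh : ∀ v : V, (T.dist (h.val v) x < T.dist (h.val v) y ↔ T.dist v x < T.dist v y) := by
    intro v
    have d1 : T.dist (h.val v) x = T.dist v x := by
      conv_lhs => rw [← hhx]
      exact hdist_h v x
    have d2 : T.dist (h.val v) y = T.dist v y := by
      conv_lhs => rw [← hhy]
      exact hdist_h v y
    rw [d1, d2]
  have hinvx : h.val⁻¹ x = x := by
    conv_lhs => rw [← hhx]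
    exact Equiv.Perm.inv_apply_self h.val x
  have hinvy : h.val⁻¹ y = y := by
    conv_lhs => rw [← hhy]
    exact Equiv.Perm.inv_apply_self h.val y
  -- the permutation acting as h on the x-side and trivially on the y-side
  set f0 : Equiv.Perm V :=
    { toFun := fun v => if T.dist v x < T.dist v y then h.val v else v
      invFun := fun v => if T.dist v x < T.dist v y then h.val⁻¹ v else v
      left_inv := by
        intro v
        by_cases hv : T.dist v x < T.dist v y
        · simp only [if_pos hv, if_pos ((hPh v).mpr hv), Equiv.Perm.inv_apply_self]
        · simp only [if_neg hv]
      right_inv := by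
        intro v
        by_cases hv : T.dist v x < T.dist v y
        · have hv' : T.dist (h.val⁻¹ v) x < T.dist (h.val⁻¹ v) y := by
            have := hPh (h.val⁻¹ v)
            rw [Equiv.Perm.apply_inv_self] at this
            exact this.mp hv
          simp only [if_pos hv, if_pos hv', Equiv.Perm.apply_inv_self]
        · simp only [if_neg hv] } with hf0def
  have hf0app : ∀ v : V, f0 v = if T.dist v x < T.dist v y then h.val v else v :=
    fun v => rfl
  have hPy : ¬ T.dist y x < T.dist y y := by
    have : T.dist y y = 0 := SimpleGraph.dist_self
    omega
  have hPx : T.dist x x < T.dist x y := by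
    have : T.dist x x = 0 := SimpleGraph.dist_self
    omega
  have hf0aut : ∀ u v : V, T.Adj (f0 u) (f0 v) ↔ T.Adj u v := by
    intro u v
    rw [hf0app, hf0app]
    by_cases hu : T.dist u x < T.dist u y <;> by_cases hv : T.dist v x < T.dist v y
    · rw [if_pos hu, if_pos hv]; exact hhprop u v
    · rw [if_pos hu, if_neg hv]
      constructor
      · intro hA
        obtain ⟨h1, h2⟩ := crossEdge hT hadj hA ((hPh u).mpr hu) hv
        have hux : u = x := h.val.injective (h1.trans hhx.symm)
        rw [hux, h2]; exact hadj
      · intro hA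
        obtain ⟨h1, h2⟩ := crossEdge hT hadj hA hu hv
        rw [h1, h2, hhx]; exact hadj
    · rw [if_neg hu, if_pos hv]
      constructor
      · intro hA
        obtain ⟨h1, h2⟩ := crossEdge hT hadj hA.symm ((hPh v).mpr hv) hu
        have hvx : v = x := h.val.injective (h1.trans hhx.symm)
        rw [hvx, h2]; exact hadj.symm
      · intro hA
        obtain ⟨h1, h2⟩ := crossEdge hT hadj hA.symm hv hu
        rw [h1, h2, hhx]; exact hadj.symm
    · rw [if_neg hu, if_neg hv]
  set f : ↥(T.autGroup) := ⟨f0, hf0aut⟩ with hfdef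
  -- f belongs to G by P₁-closedness
  have hfG : f ∈ G := by
    have hcl : f ∈ pClosure T 1 (G : Set ↥(T.autGroup)) := by
      intro v X hX
      have hXmem : ∀ u ∈ X, u = v ∨ T.Adj v u := by
        intro u huX
        by_cases huv : u = v
        · exact Or.inl huv
        · right
          have h0 : T.dist v u ≠ 0 :=
            fun h0 => huv (hT.isConnected.dist_eq_zero_iff.mp h0).symm
          have h1 : T.dist v u ≤ 1 := hX u huX
          exact SimpleGraph.dist_eq_one_iff_adj.mp (by omega)
      by_cases hv : T.dist v x < T.dist v y
      · refine ⟨h, hhG, ?_⟩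
        intro u huX
        show f0 u = h.val u
        rw [hf0app]
        by_cases hu : T.dist u x < T.dist u y
        · rw [if_pos hu]
        · rcases hXmem u huX with rfl | hA
          · exact absurd hv hu
          · obtain ⟨h1, h2⟩ := crossEdge hT hadj hA hv hu
            rw [if_neg hu, h2, hhy]
      · refine ⟨1, G.one_mem, ?_⟩
        intro u huX
        show f0 u = u
        rw [hf0app]
        by_cases hu : T.dist u x < T.dist u y
        · rcases hXmem u huX with rfl | hA
          · exact absurd hu hv
          · obtain ⟨h1, h2⟩ := crossEdge hT hadj hA.symm hu hv
            rw [if_pos hu, h1, hhx]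
        · rw [if_neg hu]
    rw [hG] at hcl
    exact hcl
  -- the complementary factor f' = f⁻¹ * h
  set f' : ↥(T.autGroup) := f⁻¹ * h with hf'def
  have hf'G : f' ∈ G := G.mul_mem (G.inv_mem hfG) hhG
  have hf'app : ∀ v : V, f'.val v = if T.dist v x < T.dist v y then v else h.val v := by
    intro v
    show f0⁻¹ (h.val v) = _
    by_cases hv : T.dist v x < T.dist v y
    · rw [if_pos hv]
      have : f0 v = h.val v := by rw [hf0app, if_pos hv]
      rw [← this, Equiv.Perm.inv_apply_self]
    · rw [if_neg hv]
      have hv' : ¬ T.dist (h.val v) x < T.dist (h.val v) y := fun hc => hv ((hPh v).mp hc)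
      have : f0 (h.val v) = h.val v := by rw [hf0app, if_neg hv']
      conv_lhs => rw [← this, Equiv.Perm.inv_apply_self]
  -- choose a large power
  set N : ℕ := (F.sup fun v => max (T.dist x v) (T.dist y v)) + 1 with hNdef
  have hNbound : ∀ v ∈ F, T.dist x v < N * ℓ ∧ T.dist y v < N * ℓ := by
    intro v hvF
    have h1 : max (T.dist x v) (T.dist y v) ≤ F.sup fun v => max (T.dist x v) (T.dist y v) :=
      Finset.le_sup (f := fun v => max (T.dist x v) (T.dist y v)) hvF
    have h2 : N ≤ N * ℓ := Nat.le_mul_of_pos_right N hx1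
    constructor
    · have := le_max_left (T.dist x v) (T.dist y v); omega
    · have := le_max_right (T.dist x v) (T.dist y v); omega
  have ADx : T.dist x ((e ^ N) x) = N * ℓ := (AD N).1
  have ADy : T.dist x ((e ^ N) y) = N * ℓ + 1 := (AD N).2.1
  have ADyy : T.dist y ((e ^ N) y) = N * ℓ := (AD N).2.2
  -- forward side condition
  have forward : ∀ v : V, T.dist x v < N * ℓ →
      T.dist v ((e ^ N) x) < T.dist v ((e ^ N) y) := by
    intro v hv
    have hXY : T.dist ((e ^ N) x) ((e ^ N) y) = 1 := by rw [dpres N x y]; exact hxy1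
    have hb : T.dist x ((e ^ N) x) + T.dist ((e ^ N) x) ((e ^ N) y) = T.dist x ((e ^ N) y) := by
      omega
    have := farside hT (X := (e ^ N) x) (Y := (e ^ N) y) (v := v) hb (by omega)
    omega
  -- backward side condition
  have backward : ∀ v : V, T.dist y v < N * ℓ →
      T.dist v ((e ^ N)⁻¹ y) < T.dist v ((e ^ N)⁻¹ x) := by
    intro v hv
    have d1 : T.dist y ((e ^ N)⁻¹ y) = N * ℓ := by
      have := dpres N y ((e ^ N)⁻¹ y)
      rw [Equiv.Perm.apply_inv_self] at this
      have c : T.dist ((e ^ N) y) y = T.dist y ((e ^ N) y) := SimpleGraph.dist_comm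
      omega
    have d2 : T.dist ((e ^ N)⁻¹ y) ((e ^ N)⁻¹ x) = 1 := by
      rw [dpresInv N y x]
      have c : T.dist y x = T.dist x y := SimpleGraph.dist_comm
      omega
    have d3 : T.dist y ((e ^ N)⁻¹ x) = N * ℓ + 1 := by
      have := dpres N y ((e ^ N)⁻¹ x)
      rw [Equiv.Perm.apply_inv_self] at this
      have c : T.dist ((e ^ N) y) x = T.dist x ((e ^ N) y) := SimpleGraph.dist_comm
      omega
    have hb : T.dist y ((e ^ N)⁻¹ y) + T.dist ((e ^ N)⁻¹ y) ((e ^ N)⁻¹ x)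
        = T.dist y ((e ^ N)⁻¹ x) := by omega
    have := farside hT (X := (e ^ N)⁻¹ y) (Y := (e ^ N)⁻¹ x) (v := v) hb (by omega)
    omega
  -- conjugate f' into the stabilizer of F
  have hgN_H : g ^ N ∈ H := H.pow_mem hgH N
  have hgN_G : g ^ N ∈ G := hHG hgN_H
  have hc1 : g ^ N * f' * (g ^ N)⁻¹ ∈ H := by
    apply hF
    · exact G.mul_mem (G.mul_mem hgN_G hf'G) (G.inv_mem hgN_G)
    · intro v hvF
      show (e ^ N) (f'.val ((e ^ N)⁻¹ v)) = v
      have hw : T.dist ((e ^ N)⁻¹ v) x < T.dist ((e ^ N)⁻¹ v) y := by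
        have d1 : T.dist ((e ^ N)⁻¹ v) x = T.dist v ((e ^ N) x) := by
          have := dpres N ((e ^ N)⁻¹ v) x
          rw [Equiv.Perm.apply_inv_self] at this
          omega
        have d2 : T.dist ((e ^ N)⁻¹ v) y = T.dist v ((e ^ N) y) := by
          have := dpres N ((e ^ N)⁻¹ v) y
          rw [Equiv.Perm.apply_inv_self] at this
          omega
        rw [d1, d2]
        exact forward v (hNbound v hvF).1
      rw [hf'app, if_pos hw, Equiv.Perm.apply_inv_self]
  have hf'H : f' ∈ H := by
    have : f' = (g ^ N)⁻¹ * (g ^ N * f' * (g ^ N)⁻¹) * g ^ N := by group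
    rw [this]
    exact H.mul_mem (H.mul_mem (H.inv_mem hgN_H) hc1) hgN_H
  -- conjugate f into the stabilizer of F
  have hc2 : (g ^ N)⁻¹ * f * g ^ N ∈ H := by
    apply hF
    · exact G.mul_mem (G.mul_mem (G.inv_mem hgN_G) hfG) hgN_G
    · intro v hvF
      show (e ^ N)⁻¹ (f0 ((e ^ N) v)) = v
      have hw : ¬ T.dist ((e ^ N) v) x < T.dist ((e ^ N) v) y := by
        have d1 : T.dist ((e ^ N) v) x = T.dist v ((e ^ N)⁻¹ x) := by
          have := dpresInv N ((e ^ N) v) x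
          rw [Equiv.Perm.inv_apply_self] at this
          omega
        have d2 : T.dist ((e ^ N) v) y = T.dist v ((e ^ N)⁻¹ y) := by
          have := dpresInv N ((e ^ N) v) y
          rw [Equiv.Perm.inv_apply_self] at this
          omega
        rw [d1, d2]
        have := backward v (hNbound v hvF).2
        omega
      rw [hf0app, if_neg hw, Equiv.Perm.inv_apply_self]
  have hfH : f ∈ H := by
    have : f = g ^ N * ((g ^ N)⁻¹ * f * g ^ N) * (g ^ N)⁻¹ := by group
    rw [this]
    exact H.mul_mem (H.mul_mem hgN_H hc2) (H.inv_mem hgN_H)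
  have : h = f * f' := by rw [hf'def]; group
  rw [this]
  exact H.mul_mem hfH hf'H
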